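/- Let k, d, ℓ be positive integers with k ≥ 2, d > k and ℓ·(k−1) ≤ d−1, and let M₁, …, M_ℓ be d × d real symmetric positive-definite matrices. There exists a constant c₀ ∈ (0,1), depending only on M₁, …, M_ℓ, with the following property. For every R ≥ 1, if A is a symmetric positive-definite matrix in 𝒟_R minimizing f over 𝒟_R and f(A) ≥ 1/k, and w₁, …, w_d is an orthonormal eigenbasis of A with eigenvalues s₁ ≥ … ≥ s_d > 0, then there exist a unit vector ũ ∈ ℝᵈ and ε₀ > 0 such that every u ∈ ℝᵈ with |u − ũ| < c₀ satisfies f_u(ε) < f_u(0) for all ε ∈ (0, ε₀). Here, for u ∈ ℝᵈ one sets η(u) = Σ_j (u_j/s_j) w_j, A_{η(u)}(ε) = A(Id + ε η(u)⊗η(u)), I = { i : f_i(A) = f(A) }, and f_u(ε) = max_{i ∈ I} λ₁(A_{η(u)}(ε)ᵀ M_i A_{η(u)}(ε)) / Tr(A_{η(u)}(ε)ᵀ M_i A_{η(u)}(ε)). -/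

import Mathlib

open Matrix

/-- The eigenvalues of a Hermitian (real symmetric) matrix, listed in decreasing order:
index `i` gives the `(i+1)`-th largest eigenvalue. For non-Hermitian matrices we return `0`. -/
noncomputable def sortedEigs {d : ℕ} (M : Matrix (Fin d) (Fin d) ℝ) : Fin d → ℝ :=
  if h : M.IsHermitian then
    fun i => (h.eigenvalues ∘ Tuple.sort h.eigenvalues) i.rev
  else fun _ => 0

/-- The singular values of a real square matrix, in decreasing order. -/
noncomputable def sval {d : ℕ} (A : Matrix (Fin d) (Fin d) ℝ) : Fin d → ℝ :=
  fun i => Real.sqrt (sortedEigs (Aᵀ * A) i)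

/-- The set `𝒟_R` of invertible matrices with `s₁(A) = 1` and `s_j(A) ≤ R·s_{j+1}(A)`. -/
def DR (d : ℕ) (hd : 1 ≤ d) (R : ℝ) : Set (Matrix (Fin d) (Fin d) ℝ) :=
  {A | IsUnit A ∧ sval A ⟨0, hd⟩ = 1 ∧
    ∀ (j : Fin d) (h : j.val + 1 < d), sval A j ≤ R * sval A ⟨j.val + 1, h⟩}

/-- `fratio M A = λ₁(AᵀMA)/Tr(AᵀMA)`, the balance ratio `f_i`. -/
noncomputable def fratio {d : ℕ} (hd : 1 ≤ d) (M A : Matrix (Fin d) (Fin d) ℝ) : ℝ :=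
  sortedEigs (Aᵀ * M * A) ⟨0, hd⟩ / Matrix.trace (Aᵀ * M * A)

namespace S14

set_option linter.unusedVariables false

variable {d : ℕ}

lemma top_eigen (hd : 1 ≤ d) (S : Matrix (Fin d) (Fin d) ℝ) (hS : S.IsHermitian) :
    ∃ j₀ : Fin d, sortedEigs S ⟨0, hd⟩ = hS.eigenvalues j₀ ∧
      ∀ j, hS.eigenvalues j ≤ hS.eigenvalues j₀ := by
  refine ⟨Tuple.sort hS.eigenvalues (Fin.rev ⟨0, hd⟩), ?_, ?_⟩
  · rw [sortedEigs, dif_pos hS]; rfl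
  · intro j
    have hmono := Tuple.monotone_sort hS.eigenvalues
    obtain ⟨i, hi⟩ : ∃ i, Tuple.sort hS.eigenvalues i = j :=
      ⟨(Tuple.sort hS.eigenvalues).symm j, by simp⟩
    rw [← hi]
    have hle : i ≤ Fin.rev ⟨0, hd⟩ := by
      rw [Fin.le_def]
      simp [Fin.rev]
      omega
    exact hmono hle

lemma trace_eq_sum_eig (S : Matrix (Fin d) (Fin d) ℝ) (hS : S.IsHermitian) :
    S.trace = ∑ r, hS.eigenvalues r := by
  simpa using hS.trace_eq_sum_eigenvalues

lemma inner_eq_dot (x y : EuclideanSpace ℝ (Fin d)) :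
    (inner ℝ x y : ℝ) = (x : Fin d → ℝ) ⬝ᵥ (y : Fin d → ℝ) := by
  simp [PiLp.inner_apply, dotProduct, mul_comm]

lemma dot_sum_right (z : Fin d → ℝ) (f : Fin d → Fin d → ℝ) :
    z ⬝ᵥ (∑ r, f r) = ∑ r, z ⬝ᵥ f r := by
  simp [dotProduct, Finset.mul_sum]
  rw [Finset.sum_comm]

lemma expand_dot (hd : 1 ≤ d) {v : Fin d → Fin d → ℝ}
    (hv : ∀ i j, v i ⬝ᵥ v j = if i = j then 1 else 0) (x : Fin d → ℝ) :
    x = ∑ r, (v r ⬝ᵥ x) • v r := by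
  haveI : Nonempty (Fin d) := ⟨⟨0, hd⟩⟩
  set v' : Fin d → EuclideanSpace ℝ (Fin d) := fun r => WithLp.toLp 2 (v r) with hv'
  have hortho : Orthonormal ℝ v' := by
    rw [orthonormal_iff_ite]
    intro i j
    rw [inner_eq_dot]
    simpa using hv i j
  have hcard : Fintype.card (Fin d) = Module.finrank ℝ (EuclideanSpace ℝ (Fin d)) := by
    simp
  have hbc : ⇑(basisOfOrthonormalOfCardEqFinrank hortho hcard) = v' :=
    coe_basisOfOrthonormalOfCardEqFinrank hortho hcard
  have honb : Orthonormal ℝ ⇑(basisOfOrthonormalOfCardEqFinrank hortho hcard) := by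
    rw [hbc]; exact hortho
  set B := (basisOfOrthonormalOfCardEqFinrank hortho hcard).toOrthonormalBasis honb with hB
  have hBc : ⇑B = v' := by
    rw [hB, Module.Basis.coe_toOrthonormalBasis, hbc]
  have h1 := B.sum_repr' (WithLp.toLp 2 x)
  have h2 : ∀ r, (inner ℝ (B r) (WithLp.toLp 2 x) : ℝ) = v r ⬝ᵥ x := by
    intro r
    rw [inner_eq_dot, hBc]
  calc x = WithLp.ofLp (WithLp.toLp 2 x : EuclideanSpace ℝ (Fin d)) := rfl
    _ = WithLp.ofLp (∑ r, (inner ℝ (B r) (WithLp.toLp 2 x) : ℝ) • B r) := by rw [h1]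
    _ = ∑ r, (v r ⬝ᵥ x) • v r := by
        rw [WithLp.ofLp_sum]
        apply Finset.sum_congr rfl
        intro r _
        rw [WithLp.ofLp_smul, h2, hBc]

variable {v : Fin d → Fin d → ℝ}

lemma dot_dot_expand (hd : 1 ≤ d)
    (hv : ∀ i j, v i ⬝ᵥ v j = if i = j then 1 else 0)
    (hx : ∀ x, x = ∑ r, (v r ⬝ᵥ x) • v r) (x z : Fin d → ℝ) :
    z ⬝ᵥ x = ∑ r, (v r ⬝ᵥ x) * (v r ⬝ᵥ z) := by
  conv_lhs => rw [hx x]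
  rw [dot_sum_right]
  apply Finset.sum_congr rfl
  intro r _
  rw [dotProduct_smul]
  rw [smul_eq_mul, dotProduct_comm (v r) z]

lemma mulVec_expand (S : Matrix (Fin d) (Fin d) ℝ) {μ : Fin d → ℝ}
    (hSv : ∀ r, S.mulVec (v r) = μ r • v r)
    (hx : ∀ x, x = ∑ r, (v r ⬝ᵥ x) • v r) (x : Fin d → ℝ) :
    S.mulVec x = ∑ r, (μ r * (v r ⬝ᵥ x)) • v r := by
  conv_lhs => rw [hx x]
  have : S.mulVec (∑ r, (v r ⬝ᵥ x) • v r) = ∑ r, (v r ⬝ᵥ x) • S.mulVec (v r) := by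
    rw [← Matrix.mulVecLin_apply]
    rw [map_sum]
    simp [Matrix.mulVecLin_apply, Matrix.mulVec_smul]
  rw [this]
  apply Finset.sum_congr rfl
  intro r _
  rw [hSv r, smul_smul, mul_comm]

lemma dot_mulVec_expand (hd : 1 ≤ d) (S : Matrix (Fin d) (Fin d) ℝ) {μ : Fin d → ℝ}
    (hv : ∀ i j, v i ⬝ᵥ v j = if i = j then 1 else 0)
    (hSv : ∀ r, S.mulVec (v r) = μ r • v r)
    (hx : ∀ x, x = ∑ r, (v r ⬝ᵥ x) • v r) (x z : Fin d → ℝ) :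
    z ⬝ᵥ S.mulVec x = ∑ r, μ r * (v r ⬝ᵥ x) * (v r ⬝ᵥ z) := by
  rw [mulVec_expand S hSv hx x, dot_sum_right]
  apply Finset.sum_congr rfl
  intro r _
  rw [dotProduct_smul, smul_eq_mul, dotProduct_comm (v r) z]

lemma dot_sq_le (x y : Fin d → ℝ) : (x ⬝ᵥ y)^2 ≤ (x ⬝ᵥ x) * (y ⬝ᵥ y) := by
  simpa [dotProduct, pow_two] using
    Finset.sum_mul_sq_le_sq_mul_sq Finset.univ x y

lemma dot_self_nonneg (x : Fin d → ℝ) : 0 ≤ x ⬝ᵥ x := by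
  apply Finset.sum_nonneg
  intro i _
  exact mul_self_nonneg _

lemma vecMulVec_mulVec' (a b x : Fin d → ℝ) :
    (vecMulVec a b).mulVec x = (b ⬝ᵥ x) • a := by
  funext i
  simp [Matrix.mulVec, vecMulVec_apply, dotProduct, Finset.sum_mul, Finset.mul_sum, mul_assoc,
    mul_comm]
  apply Finset.sum_congr rfl
  intro q _
  ring

lemma conj_dot (Mm A : Matrix (Fin d) (Fin d) ℝ) (x y : Fin d → ℝ) :
    x ⬝ᵥ ((Aᵀ * Mm * A).mulVec y) = (A.mulVec x) ⬝ᵥ (Mm.mulVec (A.mulVec y)) := by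
  rw [← Matrix.mulVec_mulVec, ← Matrix.mulVec_mulVec]
  rw [Matrix.dotProduct_mulVec x Aᵀ _, Matrix.vecMul_transpose]

lemma trace_conj (Mm A : Matrix (Fin d) (Fin d) ℝ) :
    (Aᵀ * Mm * A).trace = ∑ j, (fun p => A p j) ⬝ᵥ (Mm.mulVec (fun p => A p j)) := by
  rw [Matrix.trace]
  apply Finset.sum_congr rfl
  intro j _
  simp [Matrix.diag, Matrix.mul_apply, dotProduct, Matrix.mulVec, Finset.sum_mul, Finset.mul_sum]
  rw [Finset.sum_comm]
  apply Finset.sum_congr rfl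
  intro p _
  apply Finset.sum_congr rfl
  intro q _
  ring

lemma eigbasis_dot {S : Matrix (Fin d) (Fin d) ℝ} (hS : S.IsHermitian) (i j : Fin d) :
    ⇑(hS.eigenvectorBasis i) ⬝ᵥ ⇑(hS.eigenvectorBasis j) = if i = j then 1 else 0 := by
  have h := orthonormal_iff_ite.mp hS.eigenvectorBasis.orthonormal i j
  rw [inner_eq_dot] at h
  simpa using h

lemma sortedEigs_pos {A : Matrix (Fin d) (Fin d) ℝ} (hA : A.PosDef) (j : Fin d) :
    0 < sortedEigs A j := by
  rw [sortedEigs, dif_pos hA.1]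
  exact hA.eigenvalues_pos _

lemma posdef_conj {Mm A : Matrix (Fin d) (Fin d) ℝ} (hM : Mm.PosDef) (hA : A.PosDef) :
    (Aᵀ * Mm * A).PosDef := by
  refine Matrix.PosDef.of_dotProduct_mulVec_pos ?_ ?_
  · rw [← Matrix.conjTranspose_eq_transpose_of_trivial]
    exact Matrix.isHermitian_conjTranspose_mul_mul A hM.1
  · intro x hx
    have hAx : A.mulVec x ≠ 0 := by
      intro h0
      have := hA.dotProduct_mulVec_pos hx
      rw [star_trivial, h0] at this
      simp at this
    have := hM.dotProduct_mulVec_pos hAx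
    rw [star_trivial] at this ⊢
    rw [← Matrix.mulVec_mulVec, ← Matrix.mulVec_mulVec]
    rwa [Matrix.dotProduct_mulVec x Aᵀ _, Matrix.vecMul_transpose]

lemma hermitian_conj {Mm : Matrix (Fin d) (Fin d) ℝ} (B : Matrix (Fin d) (Fin d) ℝ)
    (hM : Mm.IsHermitian) : (Bᵀ * Mm * B).IsHermitian := by
  rw [← Matrix.conjTranspose_eq_transpose_of_trivial]
  exact Matrix.isHermitian_conjTranspose_mul_mul B hM

lemma dot_basis_mulVec (S : Matrix (Fin d) (Fin d) ℝ) {μ : Fin d → ℝ}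
    (hv : ∀ i j, v i ⬝ᵥ v j = if i = j then 1 else 0)
    (hSv : ∀ r, S.mulVec (v r) = μ r • v r)
    (hx : ∀ x, x = ∑ r, (v r ⬝ᵥ x) • v r) (z : Fin d → ℝ) (r : Fin d) :
    v r ⬝ᵥ S.mulVec z = μ r * (v r ⬝ᵥ z) := by
  have e1 : S.mulVec z = ∑ t, (μ t * (v t ⬝ᵥ z)) • v t := mulVec_expand S hSv hx z
  rw [e1, dot_sum_right]
  have : ∀ t, v r ⬝ᵥ (μ t * (v t ⬝ᵥ z)) • v t = (μ t * (v t ⬝ᵥ z)) * (if r = t then 1 else 0) := by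
    intro t
    rw [dotProduct_smul, smul_eq_mul, hv r t]
  simp only [this, mul_ite, mul_one, mul_zero]
  simp

lemma vecMulVec_transpose' (a b : Fin d → ℝ) :
    (vecMulVec a b)ᵀ = vecMulVec b a := by
  ext i j
  simp [vecMulVec_apply, mul_comm]

lemma vecMulVec_mul_self (a : Fin d → ℝ) :
    vecMulVec a a * vecMulVec a a = (a ⬝ᵥ a) • vecMulVec a a := by
  ext i j
  simp [Matrix.mul_apply, vecMulVec_apply, dotProduct, Finset.sum_mul, Finset.mul_sum]
  apply Finset.sum_congr rfl
  intro q _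
  ring

lemma trace_vecMulVec_mul (a b : Fin d → ℝ) (N : Matrix (Fin d) (Fin d) ℝ) :
    (vecMulVec a b * N).trace = b ⬝ᵥ N.mulVec a := by
  simp [Matrix.trace, Matrix.diag, Matrix.mul_apply, vecMulVec_apply, dotProduct,
    Matrix.mulVec, Finset.mul_sum]
  rw [Finset.sum_comm]
  apply Finset.sum_congr rfl
  intro q _
  apply Finset.sum_congr rfl
  intro i _
  ring

lemma conj_factor (A C Mm : Matrix (Fin d) (Fin d) ℝ) :
    (A * C)ᵀ * Mm * (A * C) = Cᵀ * (Aᵀ * Mm * A) * C := by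
  rw [Matrix.transpose_mul]
  noncomm_ring

lemma C_transpose (ε : ℝ) (η : Fin d → ℝ) :
    ((1 : Matrix (Fin d) (Fin d) ℝ) + ε • vecMulVec η η)ᵀ = 1 + ε • vecMulVec η η := by
  rw [Matrix.transpose_add, Matrix.transpose_one, Matrix.transpose_smul, vecMulVec_transpose']

lemma trace_perturb (ε : ℝ) (η : Fin d → ℝ) (N : Matrix (Fin d) (Fin d) ℝ) :
    (((1 : Matrix (Fin d) (Fin d) ℝ) + ε • vecMulVec η η) * N *
      ((1 : Matrix (Fin d) (Fin d) ℝ) + ε • vecMulVec η η)).trace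
      = N.trace + (2*ε) * (η ⬝ᵥ N.mulVec η) + (ε^2) * ((η ⬝ᵥ η) * (η ⬝ᵥ N.mulVec η)) := by
  have expand : ((1 : Matrix (Fin d) (Fin d) ℝ) + ε • vecMulVec η η) * N *
      ((1 : Matrix (Fin d) (Fin d) ℝ) + ε • vecMulVec η η)
      = N + ε • (vecMulVec η η * N) + ε • (N * vecMulVec η η)
        + (ε*ε) • (vecMulVec η η * N * vecMulVec η η) := by
    simp only [Matrix.add_mul, Matrix.mul_add, Matrix.one_mul, Matrix.mul_one, Matrix.smul_mul,
      Matrix.mul_smul, smul_smul, Matrix.mul_assoc, smul_add]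
    abel
  rw [expand]
  rw [Matrix.trace_add, Matrix.trace_add, Matrix.trace_add, Matrix.trace_smul, Matrix.trace_smul,
    Matrix.trace_smul]
  have h1 : (vecMulVec η η * N).trace = η ⬝ᵥ N.mulVec η := trace_vecMulVec_mul η η N
  have h2 : (N * vecMulVec η η).trace = η ⬝ᵥ N.mulVec η := by
    rw [Matrix.trace_mul_comm]; exact h1
  have h3 : (vecMulVec η η * N * vecMulVec η η).trace
      = (η ⬝ᵥ η) * (η ⬝ᵥ N.mulVec η) := by
    rw [Matrix.trace_mul_comm, ← Matrix.mul_assoc, vecMulVec_mul_self,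
      Matrix.smul_mul, Matrix.trace_smul, h1]
    simp
  rw [h1, h2, h3]
  simp [smul_eq_mul]
  ring

lemma C_mulVec (ε : ℝ) (η x : Fin d → ℝ) :
    ((1 : Matrix (Fin d) (Fin d) ℝ) + ε • vecMulVec η η).mulVec x
      = x + (ε * (η ⬝ᵥ x)) • η := by
  rw [Matrix.add_mulVec, Matrix.one_mulVec, Matrix.smul_mulVec, vecMulVec_mulVec']
  rw [smul_smul]

lemma ray_upper (hd : 1 ≤ d) (S : Matrix (Fin d) (Fin d) ℝ) {μ : Fin d → ℝ}
    (hv : ∀ i j, v i ⬝ᵥ v j = if i = j then 1 else 0)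
    (hSv : ∀ r, S.mulVec (v r) = μ r • v r)
    (hx : ∀ x, x = ∑ r, (v r ⬝ᵥ x) • v r) {lam : ℝ} (hlam : ∀ r, μ r ≤ lam) (x : Fin d → ℝ) :
    x ⬝ᵥ S.mulVec x ≤ lam * (x ⬝ᵥ x) := by
  rw [dot_mulVec_expand hd S hv hSv hx x x, dot_dot_expand hd hv hx x x, Finset.mul_sum]
  apply Finset.sum_le_sum
  intro r _
  rw [mul_assoc]
  exact mul_le_mul_of_nonneg_right (hlam r) (mul_self_nonneg _)

lemma ray_lower (hd : 1 ≤ d) (S : Matrix (Fin d) (Fin d) ℝ) {μ : Fin d → ℝ}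
    (hv : ∀ i j, v i ⬝ᵥ v j = if i = j then 1 else 0)
    (hSv : ∀ r, S.mulVec (v r) = μ r • v r)
    (hx : ∀ x, x = ∑ r, (v r ⬝ᵥ x) • v r) {lam : ℝ} (hlam : ∀ r, lam ≤ μ r) (x : Fin d → ℝ) :
    lam * (x ⬝ᵥ x) ≤ x ⬝ᵥ S.mulVec x := by
  rw [dot_mulVec_expand hd S hv hSv hx x x, dot_dot_expand hd hv hx x x, Finset.mul_sum]
  apply Finset.sum_le_sum
  intro r _
  rw [mul_assoc]
  exact mul_le_mul_of_nonneg_right (hlam r) (mul_self_nonneg _)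

lemma normsq_mulVec_le (hd : 1 ≤ d) (S : Matrix (Fin d) (Fin d) ℝ) {μ : Fin d → ℝ}
    (hv : ∀ i j, v i ⬝ᵥ v j = if i = j then 1 else 0)
    (hSv : ∀ r, S.mulVec (v r) = μ r • v r)
    (hx : ∀ x, x = ∑ r, (v r ⬝ᵥ x) • v r) {lam : ℝ}
    (h0 : ∀ r, 0 ≤ μ r) (hlam : ∀ r, μ r ≤ lam) (z : Fin d → ℝ) :
    (S.mulVec z) ⬝ᵥ (S.mulVec z) ≤ lam^2 * (z ⬝ᵥ z) := by
  have h1 : (S.mulVec z) ⬝ᵥ (S.mulVec z) = ∑ r, (μ r * (v r ⬝ᵥ z))^2 := by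
    rw [dot_dot_expand hd hv hx (S.mulVec z) (S.mulVec z)]
    apply Finset.sum_congr rfl
    intro r _
    rw [dot_basis_mulVec S hv hSv hx z r, pow_two]
  rw [h1, dot_dot_expand hd hv hx z z, Finset.mul_sum]
  apply Finset.sum_le_sum
  intro r _
  have : (μ r * (v r ⬝ᵥ z))^2 = (μ r)^2 * ((v r ⬝ᵥ z) * (v r ⬝ᵥ z)) := by ring
  rw [this]
  apply mul_le_mul_of_nonneg_right _ (mul_self_nonneg _)
  exact pow_le_pow_left₀ (h0 r) (hlam r) 2

end S14
namespace S14
variable {d : ℕ}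

lemma arith_sq (a z l : ℝ) (ha : 0 ≤ a) (hz : 0 ≤ z) (hl : 0 ≤ l) :
    (a + z) * (l*a + l*z) ≤ 2*l*(a^2 + z^2) := by nlinarith [sq_nonneg (a - z)]

lemma arith_final (lamS l γ ρ2 ε db H2 G T : ℝ)
    (hT : 0 < T) (hε : 0 < ε) (hl : 0 < l) (hG : 0 < G) (hρ2 : 0 ≤ ρ2) (hH2 : 0 ≤ H2)
    (hdb : 0 ≤ db)
    (hlamS : lamS ≤ l - γ*ρ2 + (2*ε)*(2*l*db + 2*l*(ρ2*H2)) + ε^2*(H2*G))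
    (hF1 : 4*ε*l*H2 ≤ γ) (hF2 : 4*db*T ≤ G) (hF3 : ε*(H2*T) ≤ l/2) :
    lamS * T < l * (T + (2*ε)*G + ε^2*(H2*G)) := by
  have hP1 : 0 ≤ (γ - 4*ε*l*H2) * (ρ2*T) :=
    mul_nonneg (by linarith) (mul_nonneg hρ2 hT.le)
  have hP2 : (ε*l)*(4*db*T) ≤ (ε*l)*G := mul_le_mul_of_nonneg_left hF2 (by positivity)
  have hP3 : (ε*G)*(ε*(H2*T)) ≤ (ε*G)*(l/2) := mul_le_mul_of_nonneg_left hF3 (by positivity)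
  have hP4 : 0 < ε*l*G := by positivity
  have hP5 : 0 ≤ ε^2*l*(H2*G) := by positivity
  have hPlus : lamS*T ≤ (l - γ*ρ2 + (2*ε)*(2*l*db + 2*l*(ρ2*H2)) + ε^2*(H2*G))*T :=
    mul_le_mul_of_nonneg_right hlamS hT.le
  nlinarith [hP1, hP2, hP3, hP4, hP5, hPlus]

set_option maxHeartbeats 2000000 in
lemma key_est (hd : 1 ≤ d) {k : ℕ} (hk : 2 ≤ k) (hdk : k < d)
    (N : Matrix (Fin d) (Fin d) ℝ) (hN : N.PosDef)
    (hTk : N.trace ≤ k * sortedEigs N ⟨0, hd⟩)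
    (Hm2 Glb b : ℝ) (hHm2 : 0 < Hm2) (hGlb : 0 < Glb) (hb : 0 ≤ b) :
    ∃ ε₀ > (0:ℝ), ∀ (η : Fin d → ℝ) (ε : ℝ), 0 < ε → ε < ε₀ →
      η ⬝ᵥ η ≤ Hm2 →
      Glb ≤ η ⬝ᵥ N.mulVec η →
      (∀ r, hN.1.eigenvalues r = sortedEigs N ⟨0, hd⟩ →
        ((⇑(hN.1.eigenvectorBasis r) : Fin d → ℝ) ⬝ᵥ η)^2 ≤ b) →
      4 * ((d:ℝ) * b) * N.trace ≤ Glb →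
      sortedEigs (((1 : Matrix (Fin d) (Fin d) ℝ) + ε • vecMulVec η η)ᵀ * N *
          ((1 : Matrix (Fin d) (Fin d) ℝ) + ε • vecMulVec η η)) ⟨0, hd⟩ /
          ((((1 : Matrix (Fin d) (Fin d) ℝ) + ε • vecMulVec η η)ᵀ * N *
            ((1 : Matrix (Fin d) (Fin d) ℝ) + ε • vecMulVec η η)).trace)
        < sortedEigs N ⟨0, hd⟩ / N.trace := by
  classical
  set lam1 := sortedEigs N ⟨0, hd⟩ with hlam1def
  obtain ⟨jN, hjN_eq, hjN_max⟩ := top_eigen hd N hN.1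
  set μ : Fin d → ℝ := hN.1.eigenvalues with hμdef
  set e : Fin d → Fin d → ℝ := fun r => ⇑(hN.1.eigenvectorBasis r) with hedef
  have hedot : ∀ i j, e i ⬝ᵥ e j = if i = j then 1 else 0 := eigbasis_dot hN.1
  have hex : ∀ x, x = ∑ r, (e r ⬝ᵥ x) • e r := expand_dot hd hedot
  have hemul : ∀ r, N.mulVec (e r) = μ r • e r := fun r => hN.1.mulVec_eigenvectorBasis r
  have hμpos : ∀ r, 0 < μ r := fun r => hN.eigenvalues_pos r
  have hμle : ∀ r, μ r ≤ lam1 := by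
    intro r; rw [hlam1def, hjN_eq]; exact hjN_max r
  have hlam1_pos : 0 < lam1 := by rw [hlam1def, hjN_eq]; exact hμpos jN
  have hT_sum : N.trace = ∑ r, μ r := trace_eq_sum_eig N hN.1
  have hT_pos : 0 < N.trace := by
    rw [hT_sum]
    apply Finset.sum_pos (fun r _ => hμpos r) ⟨⟨0, hd⟩, Finset.mem_univ _⟩
  -- the non-top eigenvalues
  set ntF : Finset (Fin d) := Finset.univ.filter (fun r => ¬ (μ r = lam1)) with hntFdef
  have hnt : ntF.Nonempty := by
    by_contra hcon
    rw [Finset.not_nonempty_iff_eq_empty, Finset.filter_eq_empty_iff] at hcon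
    have hall : ∀ r, μ r = lam1 := by
      intro r
      have := hcon (Finset.mem_univ r)
      simpa using this
    have : N.trace = (d:ℝ) * lam1 := by
      rw [hT_sum]
      rw [Finset.sum_congr rfl (fun r _ => hall r)]
      simp [mul_comm]
    have hdk' : (d:ℝ) * lam1 ≤ (k:ℝ) * lam1 := by
      rw [← this]; exact hTk
    have : (d:ℝ) ≤ (k:ℝ) := le_of_mul_le_mul_right (by simpa [mul_comm] using hdk') hlam1_pos
    have : d ≤ k := Nat.cast_le.mp this
    omega
  set lam2 := ntF.sup' hnt μ with hlam2def
  have hlam2_lt : lam2 < lam1 := by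
    rw [hlam2def]
    rw [Finset.sup'_lt_iff]
    intro r hr
    rw [hntFdef, Finset.mem_filter] at hr
    exact lt_of_le_of_ne (hμle r) hr.2
  set γ := lam1 - lam2 with hγdef
  have hγpos : 0 < γ := by rw [hγdef]; exact sub_pos.mpr hlam2_lt
  refine ⟨min (γ / (4*lam1*Hm2)) (lam1 / (2*Hm2*N.trace)),
    lt_min (by positivity) (by positivity), ?_⟩
  intro η ε hε hεlt hH2le hGlb' htopb h4b
  set T := N.trace with hTdef
  set G := η ⬝ᵥ N.mulVec η with hGdef
  have hGpos : 0 < G := lt_of_lt_of_le hGlb hGlb'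
  have hG0 : 0 ≤ G := hGpos.le
  set H2 := η ⬝ᵥ η with hH2def
  have hH20 : 0 ≤ H2 := dot_self_nonneg η
  have hεle1 : ε ≤ γ / (4*lam1*Hm2) := le_of_lt (lt_of_lt_of_le hεlt (min_le_left _ _))
  have hεle2 : ε ≤ lam1 / (2*Hm2*T) := le_of_lt (lt_of_lt_of_le hεlt (min_le_right _ _))
  set C : Matrix (Fin d) (Fin d) ℝ := 1 + ε • vecMulVec η η with hCdef
  have hCt : Cᵀ = C := C_transpose ε η
  set S := Cᵀ * N * C with hSdef
  have hS_H : S.IsHermitian := hermitian_conj C hN.1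
  obtain ⟨jS, hjS_eq, _⟩ := top_eigen hd S hS_H
  set x : Fin d → ℝ := ⇑(hS_H.eigenvectorBasis jS) with hxdef
  have hx_unit : x ⬝ᵥ x = 1 := by
    have := eigbasis_dot hS_H jS jS
    simpa [hxdef] using this
  have hSx : S.mulVec x = hS_H.eigenvalues jS • x := hS_H.mulVec_eigenvectorBasis jS
  have hlamS_ray : sortedEigs S ⟨0, hd⟩ = x ⬝ᵥ S.mulVec x := by
    rw [hSx, dotProduct_smul, smul_eq_mul, hx_unit, mul_one, hjS_eq]
  set s := η ⬝ᵥ x with hsdef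
  set y := C.mulVec x with hydef
  have hy : y = x + (ε*s) • η := by rw [hydef, hCdef]; exact C_mulVec ε η x
  have hray2 : x ⬝ᵥ S.mulVec x = y ⬝ᵥ N.mulVec y := by
    rw [hSdef, hydef]
    exact conj_dot N C x x
  set c : Fin d → ℝ := fun r => e r ⬝ᵥ x with hcdef
  set h : Fin d → ℝ := fun r => e r ⬝ᵥ η with hhdef
  have hed_y : ∀ r, e r ⬝ᵥ y = c r + (ε*s) * (h r) := by
    intro r
    rw [hy, dotProduct_add, dotProduct_smul, smul_eq_mul, hcdef, hhdef]
  have hlamS_sum : sortedEigs S ⟨0, hd⟩ = ∑ r, μ r * (c r + ε*s*h r)^2 := by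
    rw [hlamS_ray, hray2, dot_mulVec_expand hd N hedot hemul hex y y]
    apply Finset.sum_congr rfl
    intro r _
    rw [hed_y r]
    ring
  have hc2 : (1:ℝ) = ∑ r, c r * c r := by
    rw [← hx_unit]
    exact dot_dot_expand hd hedot hex x x
  have hs_sum : s = ∑ r, c r * h r := by
    rw [hsdef]
    exact dot_dot_expand hd hedot hex x η
  have hH2_sum : H2 = ∑ r, h r * h r := by
    rw [hH2def]
    exact dot_dot_expand hd hedot hex η η
  have hG_sum : G = ∑ r, μ r * (h r * h r) := by
    rw [hGdef, dot_mulVec_expand hd N hedot hemul hex η η]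
    apply Finset.sum_congr rfl
    intro r _
    ring
  set topF : Finset (Fin d) := Finset.univ.filter (fun r => μ r = lam1) with htopFdef
  have hsplit : ∀ f : Fin d → ℝ, ∑ r ∈ topF, f r + ∑ r ∈ ntF, f r = ∑ r, f r := by
    intro f
    rw [htopFdef, hntFdef]
    exact Finset.sum_filter_add_sum_filter_not Finset.univ _ f
  set ρ2 := ∑ r ∈ ntF, c r * c r with hρ2def
  have hρ2_0 : 0 ≤ ρ2 := Finset.sum_nonneg (fun r _ => mul_self_nonneg _)
  have htopc : ∑ r ∈ topF, c r * c r = 1 - ρ2 := by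
    have := hsplit (fun r => c r * c r)
    rw [← hc2] at this
    linarith only [this]
  have htopc_le : ∑ r ∈ topF, c r * c r ≤ 1 := by
    rw [htopc]; linarith only [hρ2_0]
  have htopc_0 : 0 ≤ ∑ r ∈ topF, c r * c r := Finset.sum_nonneg (fun r _ => mul_self_nonneg _)
  set A1 := ∑ r ∈ topF, h r * h r with hA1def
  have hA1_0 : 0 ≤ A1 := Finset.sum_nonneg (fun r _ => mul_self_nonneg _)
  have hA1b : A1 ≤ (d:ℝ) * b := by
    have hterm : ∀ r ∈ topF, h r * h r ≤ b := by
      intro r hr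
      rw [htopFdef, Finset.mem_filter] at hr
      have := htopb r hr.2
      calc h r * h r = (e r ⬝ᵥ η)^2 := by rw [hhdef]; ring
        _ ≤ b := this
    calc A1 ≤ ∑ _r ∈ topF, b := Finset.sum_le_sum hterm
      _ = topF.card * b := by rw [Finset.sum_const, nsmul_eq_mul]
      _ ≤ (d:ℝ) * b := by
          apply mul_le_mul_of_nonneg_right _ hb
          have hn : topF.card ≤ d := by simpa using Finset.card_le_univ topF
          exact_mod_cast hn
  set Q := ∑ r, μ r * (c r * c r) with hQdef
  have hQle : Q ≤ lam1 - γ * ρ2 := by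
    have h1 : ∑ r ∈ topF, μ r * (c r * c r) = lam1 * (1 - ρ2) := by
      rw [← htopc, Finset.mul_sum]
      apply Finset.sum_congr rfl
      intro r hr
      rw [htopFdef, Finset.mem_filter] at hr
      rw [hr.2]
    have h2 : ∑ r ∈ ntF, μ r * (c r * c r) ≤ lam2 * ρ2 := by
      rw [hρ2def, Finset.mul_sum]
      apply Finset.sum_le_sum
      intro r hr
      apply mul_le_mul_of_nonneg_right _ (mul_self_nonneg _)
      rw [hlam2def]
      exact Finset.le_sup' μ hr
    have h3 := hsplit (fun r => μ r * (c r * c r))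
    calc Q = lam1 * (1 - ρ2) + ∑ r ∈ ntF, μ r * (c r * c r) := by rw [hQdef, ← h3, h1]
      _ ≤ lam1 * (1 - ρ2) + lam2 * ρ2 := by linarith only [h2]
      _ = lam1 - γ * ρ2 := by rw [hγdef]; ring
  set s₁ := ∑ r ∈ topF, c r * h r with hs₁def
  set s₂ := ∑ r ∈ ntF, c r * h r with hs₂def
  set W₂ := ∑ r ∈ ntF, μ r * (c r * h r) with hW₂def
  have hs_split : s = s₁ + s₂ := by
    rw [hs_sum, hs₁def, hs₂def, hsplit]
  have hW_split : ∑ r, μ r * (c r * h r) = lam1 * s₁ + W₂ := by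
    rw [← hsplit (fun r => μ r * (c r * h r)), hW₂def]
    congr 1
    rw [hs₁def, Finset.mul_sum]
    apply Finset.sum_congr rfl
    intro r hr
    rw [htopFdef, Finset.mem_filter] at hr
    rw [hr.2]
  have hnth_le : ∑ r ∈ ntF, h r * h r ≤ H2 := by
    rw [hH2_sum, hntFdef]
    exact Finset.sum_le_sum_of_subset_of_nonneg (Finset.filter_subset _ _)
      (fun r _ _ => mul_self_nonneg _)
  have hs₁sq : s₁^2 ≤ (d:ℝ) * b := by
    have hcs := Finset.sum_mul_sq_le_sq_mul_sq topF c h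
    have h1 : (∑ r ∈ topF, c r * h r)^2 ≤ (∑ r ∈ topF, c r^2) * (∑ r ∈ topF, h r^2) := hcs
    have e1 : ∑ r ∈ topF, c r^2 = ∑ r ∈ topF, c r * c r := by
      apply Finset.sum_congr rfl; intro r _; ring
    have e2 : ∑ r ∈ topF, h r^2 = ∑ r ∈ topF, h r * h r := by
      apply Finset.sum_congr rfl; intro r _; ring
    rw [e1, e2] at h1
    calc s₁^2 ≤ (∑ r ∈ topF, c r * c r) * A1 := by rw [hs₁def, hA1def]; exact h1
      _ ≤ 1 * A1 := mul_le_mul_of_nonneg_right htopc_le hA1_0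
      _ = A1 := one_mul _
      _ ≤ (d:ℝ) * b := hA1b
  have hs₂sq : s₂^2 ≤ ρ2 * H2 := by
    have hcs := Finset.sum_mul_sq_le_sq_mul_sq ntF c h
    have e1 : ∑ r ∈ ntF, c r^2 = ρ2 := by
      rw [hρ2def]; apply Finset.sum_congr rfl; intro r _; ring
    have e2 : ∑ r ∈ ntF, h r^2 = ∑ r ∈ ntF, h r * h r := by
      apply Finset.sum_congr rfl; intro r _; ring
    rw [e1, e2] at hcs
    calc s₂^2 ≤ ρ2 * (∑ r ∈ ntF, h r * h r) := by rw [hs₂def]; exact hcs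
      _ ≤ ρ2 * H2 := mul_le_mul_of_nonneg_left hnth_le hρ2_0
  have hW₂sq : W₂^2 ≤ lam1^2 * (ρ2 * H2) := by
    have hcs := Finset.sum_mul_sq_le_sq_mul_sq ntF (fun r => μ r * h r) c
    have e0 : ∑ r ∈ ntF, (μ r * h r) * c r = W₂ := by
      rw [hW₂def]; apply Finset.sum_congr rfl; intro r _; ring
    have e1 : ∑ r ∈ ntF, (μ r * h r)^2 ≤ lam1^2 * (∑ r ∈ ntF, h r * h r) := by
      rw [Finset.mul_sum]
      apply Finset.sum_le_sum
      intro r _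
      have h1 : 0 ≤ μ r := (hμpos r).le
      have h2 : μ r ≤ lam1 := hμle r
      calc (μ r * h r)^2 = μ r^2 * (h r * h r) := by ring
        _ ≤ lam1^2 * (h r * h r) :=
            mul_le_mul_of_nonneg_right (pow_le_pow_left₀ h1 h2 2) (mul_self_nonneg _)
    have e2 : ∑ r ∈ ntF, c r^2 = ρ2 := by
      rw [hρ2def]; apply Finset.sum_congr rfl; intro r _; ring
    rw [e0, e2] at hcs
    calc W₂^2 ≤ (∑ r ∈ ntF, (μ r * h r)^2) * ρ2 := hcs
      _ ≤ (lam1^2 * (∑ r ∈ ntF, h r * h r)) * ρ2 := mul_le_mul_of_nonneg_right e1 hρ2_0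
      _ = lam1^2 * ((∑ r ∈ ntF, h r * h r) * ρ2) := by ring
      _ ≤ lam1^2 * (H2 * ρ2) :=
          mul_le_mul_of_nonneg_left (mul_le_mul_of_nonneg_right hnth_le hρ2_0) (sq_nonneg lam1)
      _ = lam1^2 * (ρ2 * H2) := by ring
  set a := Real.sqrt ((d:ℝ) * b) with hadef
  set z := Real.sqrt (ρ2 * H2) with hzdef
  have ha0 : 0 ≤ a := Real.sqrt_nonneg _
  have hz0 : 0 ≤ z := Real.sqrt_nonneg _
  have ha2 : a^2 = (d:ℝ) * b := Real.sq_sqrt (by positivity)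
  have hz2 : z^2 = ρ2 * H2 := Real.sq_sqrt (mul_nonneg hρ2_0 hH20)
  have habs_s₁ : |s₁| ≤ a := by
    have h1 : s₁^2 ≤ a^2 := by rw [ha2]; exact hs₁sq
    have := Real.sqrt_le_sqrt h1
    rwa [Real.sqrt_sq_eq_abs, Real.sqrt_sq ha0] at this
  have habs_s₂ : |s₂| ≤ z := by
    have h1 : s₂^2 ≤ z^2 := by rw [hz2]; exact hs₂sq
    have := Real.sqrt_le_sqrt h1
    rwa [Real.sqrt_sq_eq_abs, Real.sqrt_sq hz0] at this
  have habs_W₂ : |W₂| ≤ lam1 * z := by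
    have h1 : W₂^2 ≤ (lam1*z)^2 := by
      rw [mul_pow, hz2]; exact hW₂sq
    have := Real.sqrt_le_sqrt h1
    rwa [Real.sqrt_sq_eq_abs, Real.sqrt_sq (mul_nonneg hlam1_pos.le hz0)] at this
  have hsW : s * (lam1 * s₁ + W₂) ≤ 2*lam1*((d:ℝ)*b) + 2*lam1*(ρ2*H2) := by
    have h1 : s * (lam1 * s₁ + W₂) ≤ |s| * |lam1 * s₁ + W₂| := by
      calc s * (lam1 * s₁ + W₂) ≤ |s * (lam1 * s₁ + W₂)| := le_abs_self _
        _ = |s| * |lam1 * s₁ + W₂| := abs_mul _ _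
    have h2 : |s| ≤ a + z := by
      rw [hs_split]
      calc |s₁ + s₂| ≤ |s₁| + |s₂| := abs_add_le _ _
        _ ≤ a + z := add_le_add habs_s₁ habs_s₂
    have h3 : |lam1 * s₁ + W₂| ≤ lam1 * a + lam1 * z := by
      calc |lam1 * s₁ + W₂| ≤ |lam1 * s₁| + |W₂| := abs_add_le _ _
        _ = lam1 * |s₁| + |W₂| := by rw [abs_mul, abs_of_pos hlam1_pos]
        _ ≤ lam1 * a + lam1 * z := add_le_add (mul_le_mul_of_nonneg_left habs_s₁ hlam1_pos.le) habs_W₂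
    have h4 : |s| * |lam1 * s₁ + W₂| ≤ (a + z) * (lam1 * a + lam1 * z) := by
      apply mul_le_mul h2 h3 (abs_nonneg _) (by positivity)
    have h5 : (a + z) * (lam1 * a + lam1 * z) ≤ 2*lam1*(a^2 + z^2) :=
      arith_sq a z lam1 ha0 hz0 hlam1_pos.le
    calc s * (lam1 * s₁ + W₂) ≤ (a + z) * (lam1 * a + lam1 * z) := le_trans h1 h4
      _ ≤ 2*lam1*(a^2 + z^2) := h5
      _ = 2*lam1*((d:ℝ)*b) + 2*lam1*(ρ2*H2) := by rw [ha2, hz2]; ring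
  have hs2H : s^2 ≤ H2 := by
    have := dot_sq_le η x
    rw [← hsdef, ← hH2def, hx_unit, mul_one] at this
    exact this
  have hlamS_le : sortedEigs S ⟨0, hd⟩
      ≤ lam1 - γ * ρ2 + (2*ε)*(2*lam1*((d:ℝ)*b) + 2*lam1*(ρ2*H2)) + ε^2*(H2*G) := by
    have hexp : ∀ r, μ r * (c r + ε*s*h r)^2
        = μ r * (c r*c r) + (2*ε*s)*(μ r * (c r*h r)) + (ε^2*s^2)*(μ r*(h r*h r)) := by
      intro r; ring
    have hsum : sortedEigs S ⟨0, hd⟩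
        = Q + (2*ε)*(s*(lam1 * s₁ + W₂)) + (ε^2*s^2)*G := by
      rw [hlamS_sum, Finset.sum_congr rfl (fun r _ => hexp r), Finset.sum_add_distrib,
        Finset.sum_add_distrib, ← Finset.mul_sum, ← Finset.mul_sum, hW_split, ← hG_sum, ← hQdef]
      ring
    rw [hsum]
    have t2 : (2*ε)*(s*(lam1 * s₁ + W₂)) ≤ (2*ε)*(2*lam1*((d:ℝ)*b) + 2*lam1*(ρ2*H2)) :=
      mul_le_mul_of_nonneg_left hsW (by positivity)
    have t3 : (ε^2*s^2)*G ≤ ε^2*(H2*G) := by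
      calc (ε^2*s^2)*G = ε^2*(s^2*G) := by ring
        _ ≤ ε^2*(H2*G) :=
            mul_le_mul_of_nonneg_left (mul_le_mul_of_nonneg_right hs2H hG0) (sq_nonneg ε)
    linarith only [hQle, t2, t3]
  have htr : S.trace = T + (2*ε)*G + ε^2*(H2*G) := by
    rw [hSdef, hCt]
    exact trace_perturb ε η N
  -- key numeric facts
  have hF1 : 4*ε*lam1*H2 ≤ γ := by
    have h1 : ε * (4*lam1*Hm2) ≤ γ := (le_div_iff₀ (by positivity)).mp hεle1
    calc 4*ε*lam1*H2 ≤ 4*ε*lam1*Hm2 := by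
          apply mul_le_mul_of_nonneg_left hH2le (by positivity)
      _ = ε * (4*lam1*Hm2) := by ring
      _ ≤ γ := h1
  have hF2 : 4*((d:ℝ)*b)*T ≤ G := le_trans h4b hGlb'
  have hF3 : ε*(H2*T) ≤ lam1/2 := by
    have h1 : ε * (2*Hm2*T) ≤ lam1 := (le_div_iff₀ (by positivity)).mp hεle2
    have h2 : H2*T ≤ Hm2*T := mul_le_mul_of_nonneg_right hH2le hT_pos.le
    calc ε*(H2*T) ≤ ε*(Hm2*T) := mul_le_mul_of_nonneg_left h2 hε.le
      _ = (ε*(2*Hm2*T))/2 := by ring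
      _ ≤ lam1/2 := by linarith only [h1]
  have hfinal : sortedEigs S ⟨0, hd⟩ * T < lam1 * S.trace := by
    rw [htr]
    exact arith_final (sortedEigs S ⟨0, hd⟩) lam1 γ ρ2 ε ((d:ℝ)*b) H2 G T hT_pos hε hlam1_pos
      hGpos hρ2_0 hH20 (by positivity) hlamS_le hF1 hF2 hF3
  have hStr_pos : 0 < S.trace := by
    rw [htr]
    have h1 : 0 < (2*ε)*G := by positivity
    have h2 : 0 ≤ ε^2*(H2*G) := by positivity
    linarith only [hT_pos, h1, h2]
  rw [div_lt_div_iff₀ hStr_pos hT_pos]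
  exact hfinal

end S14
namespace S14
variable {d : ℕ}

lemma arith_interval (uu p e : ℝ) (h : uu = 1 + 2*p + e) (he0 : 0 ≤ e) (he : e < 1/4)
    (hp : p^2 ≤ e) : 1/4 ≤ uu ∧ uu ≤ 9/4 := by
  constructor
  · nlinarith [sq_nonneg (p + 1/2)]
  · nlinarith [sq_nonneg (p - 1/2)]

lemma arith_dbound (D k2 c2 lamM T lamm : ℝ) (hD : 0 ≤ D) (hk2 : 0 ≤ k2) (hc2 : 0 ≤ c2)
    (hlamM : 0 ≤ lamM) (hT : T ≤ D*lamM) (hkey : 64*D^2*k2*lamM*c2 ≤ lamm) :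
    4*(D*(k2*c2))*T ≤ lamm/4 := by
  nlinarith [mul_le_mul_of_nonneg_left hT (by positivity : (0:ℝ) ≤ 4*(D*(k2*c2))),
    (by positivity : (0:ℝ) ≤ D^2*k2*lamM*c2)]

end S14

open S14 in
set_option maxHeartbeats 2000000 in
/-- key proposition. Under the assumptions `k ≥ 2`, `d > k`,
`ℓ·(k−1) ≤ d−1`, with `M i` symmetric positive definite, there is a constant `c₀ ∈ (0,1)`
depending only on the `M i`, such that: for every `R ≥ 1`, every symmetric positive definite
minimizer `A` of `f = max_i fratio (M i)` over `𝒟_R` with `f(A) ≥ 1/k`, and every orthonormal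
eigenbasis `w` of `A` with eigenvalues `s_j = sortedEigs A j`, there exist a (Euclidean) unit
vector `u₀` and `ε₀ > 0` so that every `u` with `|u − u₀| < c₀` satisfies `f_u(ε) < f_u(0)` for
all `ε ∈ (0, ε₀)`. Here `η(u) = Σ_j (u_j/s_j)·w_j`, `A_{η(u)}(ε) = A(Id + ε η(u)⊗η(u))`,
`I = {i : fratio (M i) A = f(A)}` and `f_u(ε) = max_{i ∈ I} fratio (M i) (A_{η(u)}(ε))`. -/
theorem stmt14 (k d ℓ : ℕ) (hk : 2 ≤ k) (hdk : k < d) (hd : 1 ≤ d) (hℓ : 1 ≤ ℓ)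
    (hℓk : ℓ * (k - 1) ≤ d - 1)
    (M : Fin ℓ → Matrix (Fin d) (Fin d) ℝ) (hM : ∀ i, (M i).PosDef) :
    ∃ c₀ : ℝ, 0 < c₀ ∧ c₀ < 1 ∧
      ∀ R : ℝ, 1 ≤ R →
      ∀ A : Matrix (Fin d) (Fin d) ℝ, A ∈ DR d hd R → A.PosDef →
      (∀ B ∈ DR d hd R, (⨆ i, fratio hd (M i) A) ≤ ⨆ i, fratio hd (M i) B) →
      (⨆ i, fratio hd (M i) A) ≥ 1 / (k : ℝ) →
      ∀ w : Fin d → Fin d → ℝ,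
      (∀ j : Fin d, A.mulVec (w j) = sortedEigs A j • w j) →
      (∀ i j : Fin d, w i ⬝ᵥ w j = if i = j then 1 else 0) →
      ∃ u₀ : Fin d → ℝ, u₀ ⬝ᵥ u₀ = 1 ∧
        ∃ ε₀ > (0 : ℝ), ∀ u : Fin d → ℝ, (u - u₀) ⬝ᵥ (u - u₀) < c₀ ^ 2 →
          ∀ ε : ℝ, 0 < ε → ε < ε₀ →
            (⨆ i : {i : Fin ℓ // fratio hd (M i) A = ⨆ i', fratio hd (M i') A},
                fratio hd (M i.1)
                  (A * (1 + ε • vecMulVec (∑ j, (u j / sortedEigs A j) • w j)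
                    (∑ j, (u j / sortedEigs A j) • w j))))
              < ⨆ i : {i : Fin ℓ // fratio hd (M i) A = ⨆ i', fratio hd (M i') A},
                  fratio hd (M i.1) A := by
  classical
  haveI : Nonempty (Fin ℓ) := ⟨⟨0, hℓ⟩⟩
  have hd0 : 0 < d := hd
  have hk0 : (0:ℝ) < (k:ℝ) := by exact_mod_cast lt_of_lt_of_le (by norm_num) hk
  have hPne : (Finset.univ : Finset (Fin ℓ × Fin d)).Nonempty :=
    ⟨(⟨0, hℓ⟩, ⟨0, hd⟩), Finset.mem_univ _⟩
  set lamm := Finset.inf' Finset.univ hPne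
    (fun p : Fin ℓ × Fin d => (hM p.1).1.eigenvalues p.2) with hlammdef
  set lamM := Finset.sup' Finset.univ hPne
    (fun p : Fin ℓ × Fin d => (hM p.1).1.eigenvalues p.2) with hlamMdef
  have hlamm_pos : 0 < lamm := by
    rw [hlammdef, Finset.lt_inf'_iff]
    intro p _
    exact (hM p.1).eigenvalues_pos p.2
  have hlamm_le : ∀ i r, lamm ≤ (hM i).1.eigenvalues r := fun i r =>
    Finset.inf'_le _ (Finset.mem_univ (i, r))
  have hlamM_ge : ∀ i r, (hM i).1.eigenvalues r ≤ lamM := fun i r =>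
    Finset.le_sup' (fun p : Fin ℓ × Fin d => (hM p.1).1.eigenvalues p.2) (Finset.mem_univ (i, r))
  have hlamM_pos : 0 < lamM :=
    lt_of_lt_of_le hlamm_pos (le_trans (hlamm_le ⟨0,hℓ⟩ ⟨0,hd⟩) (hlamM_ge ⟨0,hℓ⟩ ⟨0,hd⟩))
  set κ := (k:ℝ) * lamM / lamm with hκdef
  have hκpos : 0 < κ := by rw [hκdef]; positivity
  have hdR : (0:ℝ) < (d:ℝ) := by exact_mod_cast hd0
  set c₀ := min (1/2 : ℝ) (Real.sqrt (lamm / (64 * (d:ℝ)^2 * κ^2 * lamM))) with hc₀def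
  have hc₀pos : 0 < c₀ := by
    apply lt_min (by norm_num)
    apply Real.sqrt_pos.mpr
    positivity
  have hc₀half : c₀ ≤ 1/2 := min_le_left _ _
  have hc₀key : 64 * (d:ℝ)^2 * κ^2 * lamM * c₀^2 ≤ lamm := by
    have h1 : c₀ ≤ Real.sqrt (lamm / (64 * (d:ℝ)^2 * κ^2 * lamM)) := min_le_right _ _
    have h2 : c₀^2 ≤ lamm / (64 * (d:ℝ)^2 * κ^2 * lamM) := by
      calc c₀^2 ≤ (Real.sqrt (lamm / (64 * (d:ℝ)^2 * κ^2 * lamM)))^2 :=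
            pow_le_pow_left₀ hc₀pos.le h1 2
        _ = lamm / (64 * (d:ℝ)^2 * κ^2 * lamM) := Real.sq_sqrt (by positivity)
    have h3 : (0:ℝ) < 64 * (d:ℝ)^2 * κ^2 * lamM := by positivity
    rw [le_div_iff₀ h3] at h2
    nlinarith [h2]
  refine ⟨c₀, hc₀pos, lt_of_le_of_lt hc₀half (by norm_num), ?_⟩
  intro R hR A hADR hA hmin hfk w hw hworth
  clear hmin hR
  -- basic data about A
  have hwx : ∀ x : Fin d → ℝ, x = ∑ r, (w r ⬝ᵥ x) • w r := expand_dot hd hworth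
  have hspos : ∀ j, 0 < sortedEigs A j := sortedEigs_pos hA
  set smin := Finset.inf' Finset.univ (Finset.univ_nonempty_iff.mpr ⟨⟨0,hd⟩⟩) (sortedEigs A) with hsmindef
  have hsmin_pos : 0 < smin := by
    rw [hsmindef, Finset.lt_inf'_iff]; intro j _; exact hspos j
  have hsmin_le : ∀ j, smin ≤ sortedEigs A j := fun j =>
    Finset.inf'_le _ (Finset.mem_univ j)
  have hAtA_pd : (Aᵀ * A).PosDef := by
    have := posdef_conj (Matrix.PosDef.one) hA
    simpa [Matrix.mul_one] using this
  obtain ⟨jA, hjA_eq, hjA_max⟩ := top_eigen hd (Aᵀ*A) hAtA_pd.1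
  have htop1 : sortedEigs (Aᵀ*A) ⟨0,hd⟩ = 1 := by
    have h0 : 0 < sortedEigs (Aᵀ*A) ⟨0,hd⟩ := by
      rw [hjA_eq]; exact hAtA_pd.eigenvalues_pos jA
    have h2 : Real.sqrt (sortedEigs (Aᵀ * A) ⟨0, hd⟩) = 1 := hADR.2.1
    have h3 := Real.sq_sqrt h0.le
    rw [h2] at h3
    rw [← h3]
    norm_num
  have hAtA_le1 : ∀ r, hAtA_pd.1.eigenvalues r ≤ 1 := by
    intro r
    rw [← htop1, hjA_eq]
    exact hjA_max r
  have hbA_dot := eigbasis_dot hAtA_pd.1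
  have hbA_x : ∀ x : Fin d → ℝ, x = ∑ r, (⇑(hAtA_pd.1.eigenvectorBasis r) ⬝ᵥ x) •
      ⇑(hAtA_pd.1.eigenvectorBasis r) := expand_dot hd hbA_dot
  have hbA_mul : ∀ r, (Aᵀ*A).mulVec ⇑(hAtA_pd.1.eigenvectorBasis r)
      = hAtA_pd.1.eigenvalues r • ⇑(hAtA_pd.1.eigenvectorBasis r) := fun r =>
    hAtA_pd.1.mulVec_eigenvectorBasis r
  have hAx_le : ∀ x : Fin d → ℝ, (A.mulVec x) ⬝ᵥ (A.mulVec x) ≤ x ⬝ᵥ x := by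
    intro x
    have h1 := ray_upper hd (Aᵀ*A) hbA_dot hbA_mul hbA_x hAtA_le1 x
    have h2 : x ⬝ᵥ (Aᵀ*A).mulVec x = (A.mulVec x) ⬝ᵥ (A.mulVec x) := by
      have h3 := conj_dot 1 A x x
      rw [Matrix.mul_one, Matrix.one_mulVec] at h3
      exact h3
    rw [h2, one_mul] at h1
    exact h1
  have htrAtA_lb : 1 ≤ (Aᵀ*A).trace := by
    rw [trace_eq_sum_eig (Aᵀ*A) hAtA_pd.1]
    calc (1:ℝ) = hAtA_pd.1.eigenvalues jA := by rw [← hjA_eq, htop1]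
      _ ≤ ∑ r, hAtA_pd.1.eigenvalues r :=
          Finset.single_le_sum (fun r _ => (hAtA_pd.eigenvalues_pos r).le) (Finset.mem_univ jA)
  have htrAtA_ub : (Aᵀ*A).trace ≤ (d:ℝ) := by
    rw [trace_eq_sum_eig (Aᵀ*A) hAtA_pd.1]
    calc ∑ r, hAtA_pd.1.eigenvalues r ≤ ∑ _r : Fin d, (1:ℝ) :=
        Finset.sum_le_sum (fun r _ => hAtA_le1 r)
      _ = (d:ℝ) := by simp
  -- Rayleigh bounds for the M i
  have hbM_dot : ∀ i, ∀ r t : Fin d, ⇑((hM i).1.eigenvectorBasis r) ⬝ᵥ ⇑((hM i).1.eigenvectorBasis t)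
      = if r = t then 1 else 0 := fun i => eigbasis_dot (hM i).1
  have hbM_x : ∀ i, ∀ x : Fin d → ℝ, x = ∑ r, (⇑((hM i).1.eigenvectorBasis r) ⬝ᵥ x) •
      ⇑((hM i).1.eigenvectorBasis r) := fun i => expand_dot hd (hbM_dot i)
  have hbM_mul : ∀ i r, (M i).mulVec ⇑((hM i).1.eigenvectorBasis r)
      = (hM i).1.eigenvalues r • ⇑((hM i).1.eigenvectorBasis r) := fun i r =>
    (hM i).1.mulVec_eigenvectorBasis r
  have hrayM_low : ∀ i, ∀ x : Fin d → ℝ, lamm * (x ⬝ᵥ x) ≤ x ⬝ᵥ (M i).mulVec x := fun i x =>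
    ray_lower hd (M i) (hbM_dot i) (hbM_mul i) (hbM_x i) (fun r => hlamm_le i r) x
  have hrayM_up : ∀ i, ∀ x : Fin d → ℝ, x ⬝ᵥ (M i).mulVec x ≤ lamM * (x ⬝ᵥ x) := fun i x =>
    ray_upper hd (M i) (hbM_dot i) (hbM_mul i) (hbM_x i) (fun r => hlamM_ge i r) x
  have hnormM : ∀ i, ∀ z : Fin d → ℝ, ((M i).mulVec z) ⬝ᵥ ((M i).mulVec z) ≤ lamM^2 * (z ⬝ᵥ z) :=
    fun i z => normsq_mulVec_le hd (M i) (hbM_dot i) (hbM_mul i) (hbM_x i)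
      (fun r => ((hM i).eigenvalues_pos r).le) (fun r => hlamM_ge i r) z
  -- data for N i = Aᵀ (M i) A
  have hN_pd : ∀ i, (Aᵀ * M i * A).PosDef := fun i => posdef_conj (hM i) hA
  have hcol_tr : (Aᵀ*A).trace = ∑ j, (fun p => A p j) ⬝ᵥ (fun p => A p j) := by
    have := trace_conj 1 A
    simpa [Matrix.one_mulVec, Matrix.mul_one] using this
  have hT_lb : ∀ i, lamm ≤ (Aᵀ * M i * A).trace := by
    intro i
    rw [trace_conj (M i) A]
    calc lamm ≤ lamm * (Aᵀ*A).trace := le_mul_of_one_le_right hlamm_pos.le htrAtA_lb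
      _ = ∑ j, lamm * ((fun p => A p j) ⬝ᵥ (fun p => A p j)) := by
          rw [hcol_tr, Finset.mul_sum]
      _ ≤ ∑ j, (fun p => A p j) ⬝ᵥ (M i).mulVec (fun p => A p j) :=
          Finset.sum_le_sum (fun j _ => hrayM_low i _)
  have hT_pos : ∀ i, 0 < (Aᵀ * M i * A).trace := fun i => lt_of_lt_of_le hlamm_pos (hT_lb i)
  have hT_ub : ∀ i, (Aᵀ * M i * A).trace ≤ (d:ℝ) * lamM := by
    intro i
    rw [trace_conj (M i) A]
    calc ∑ j, (fun p => A p j) ⬝ᵥ (M i).mulVec (fun p => A p j)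
        ≤ ∑ j, lamM * ((fun p => A p j) ⬝ᵥ (fun p => A p j)) :=
          Finset.sum_le_sum (fun j _ => hrayM_up i _)
      _ = lamM * (Aᵀ*A).trace := by rw [hcol_tr, Finset.mul_sum]
      _ ≤ lamM * (d:ℝ) := mul_le_mul_of_nonneg_left htrAtA_ub hlamM_pos.le
      _ = (d:ℝ) * lamM := mul_comm _ _
  -- supremum facts
  have hbdd : BddAbove (Set.range (fun i => fratio hd (M i) A)) := (Set.finite_range _).bddAbove
  obtain ⟨imax, _, himax⟩ := Finset.exists_max_image Finset.univ (fun i => fratio hd (M i) A)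
    ⟨⟨0,hℓ⟩, Finset.mem_univ _⟩
  have hfsup_eq : (⨆ i, fratio hd (M i) A) = fratio hd (M imax) A :=
    le_antisymm (ciSup_le (fun i => himax i (Finset.mem_univ i))) (le_ciSup hbdd imax)
  -- for the active indices
  have hkeyT : ∀ i : Fin ℓ, fratio hd (M i) A = (⨆ i', fratio hd (M i') A) →
      (Aᵀ * M i * A).trace ≤ (k:ℝ) * sortedEigs (Aᵀ * M i * A) ⟨0, hd⟩ := by
    intro i hi
    have hge : 1/(k:ℝ) ≤ fratio hd (M i) A := by rw [hi]; exact hfk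
    have hge2 : 1/(k:ℝ) ≤ sortedEigs (Aᵀ * M i * A) ⟨0, hd⟩ / (Aᵀ * M i * A).trace := hge
    rw [div_le_div_iff₀ hk0 (hT_pos i)] at hge2
    linarith only [hge2]
  have hlam1_lb : ∀ i : Fin ℓ, fratio hd (M i) A = (⨆ i', fratio hd (M i') A) →
      lamm / (k:ℝ) ≤ sortedEigs (Aᵀ * M i * A) ⟨0, hd⟩ := by
    intro i hi
    rw [div_le_iff₀ hk0]
    have h1 := hkeyT i hi
    have h2 := hT_lb i
    linarith only [h1, h2]
  have hlam1_pos : ∀ i : Fin ℓ, 0 < sortedEigs (Aᵀ * M i * A) ⟨0, hd⟩ := fun i =>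
    sortedEigs_pos (hN_pd i) _
  -- the constraint vectors q
  set q : Fin ℓ × Fin d → Fin d → ℝ := fun p => fun j =>
    (⇑((hN_pd p.1).1.eigenvectorBasis p.2) ⬝ᵥ w j) / sortedEigs A j with hqdef
  have hq_eta : ∀ (p : Fin ℓ × Fin d) (u : Fin d → ℝ),
      ⇑((hN_pd p.1).1.eigenvectorBasis p.2) ⬝ᵥ (∑ j, (u j / sortedEigs A j) • w j)
        = q p ⬝ᵥ u := by
    intro p u
    rw [dot_sum_right, dotProduct]
    apply Finset.sum_congr rfl
    intro j _
    rw [dotProduct_smul, smul_eq_mul, hqdef]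
    have := (hspos j).ne'
    field_simp
  have hq_sq : ∀ (p : Fin ℓ × Fin d), fratio hd (M p.1) A = (⨆ i', fratio hd (M i') A) →
      (hN_pd p.1).1.eigenvalues p.2 = sortedEigs (Aᵀ * M p.1 * A) ⟨0, hd⟩ →
      q p ⬝ᵥ q p ≤ κ^2 := by
    rintro ⟨i, r⟩ hi hr
    set ev : Fin d → ℝ := ⇑((hN_pd i).1.eigenvectorBasis r) with hevdef
    set lam1i := sortedEigs (Aᵀ * M i * A) ⟨0, hd⟩ with hlam1idef
    have hlam1i_pos : 0 < lam1i := hlam1_pos i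
    set g : Fin d → ℝ := (M i).mulVec (A.mulVec ev) with hgdef
    have hqg : ∀ j, q (i, r) j = (g ⬝ᵥ w j) / lam1i := by
      intro j
      have h1 : (g ⬝ᵥ w j) * sortedEigs A j = (ev ⬝ᵥ w j) * lam1i := by
        calc (g ⬝ᵥ w j) * sortedEigs A j = g ⬝ᵥ (sortedEigs A j • w j) := by
              rw [dotProduct_smul, smul_eq_mul]; ring
          _ = g ⬝ᵥ A.mulVec (w j) := by rw [hw j]
          _ = (A.mulVec (w j)) ⬝ᵥ g := dotProduct_comm _ _
          _ = (A.mulVec (w j)) ⬝ᵥ ((M i).mulVec (A.mulVec ev)) := by rw [hgdef]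
          _ = w j ⬝ᵥ ((Aᵀ * M i * A).mulVec ev) := (conj_dot (M i) A (w j) ev).symm
          _ = w j ⬝ᵥ (lam1i • ev) := by
              rw [hevdef]
              rw [(hN_pd i).1.mulVec_eigenvectorBasis r, hr]
          _ = lam1i * (w j ⬝ᵥ ev) := by rw [dotProduct_smul, smul_eq_mul]
          _ = (ev ⬝ᵥ w j) * lam1i := by rw [dotProduct_comm]; ring
      show (ev ⬝ᵥ w j) / sortedEigs A j = (g ⬝ᵥ w j) / lam1i
      rw [div_eq_div_iff (hspos j).ne' hlam1i_pos.ne']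
      linarith only [h1]
    have hqq : q (i,r) ⬝ᵥ q (i,r) = (g ⬝ᵥ g) / lam1i^2 := by
      rw [dotProduct]
      rw [Finset.sum_congr rfl (fun j _ => by rw [hqg j])]
      rw [dot_dot_expand hd hworth hwx g g]
      rw [Finset.sum_div]
      apply Finset.sum_congr rfl
      intro j _
      rw [dotProduct_comm (w j) g]
      ring
    have hgg : g ⬝ᵥ g ≤ lamM^2 := by
      have h1 := hnormM i (A.mulVec ev)
      have h2 := hAx_le ev
      have h3 : ev ⬝ᵥ ev = 1 := by
        have := eigbasis_dot (hN_pd i).1 r r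
        simpa [hevdef] using this
      rw [h3] at h2
      calc g ⬝ᵥ g ≤ lamM^2 * ((A.mulVec ev) ⬝ᵥ (A.mulVec ev)) := h1
        _ ≤ lamM^2 * 1 := mul_le_mul_of_nonneg_left h2 (sq_nonneg _)
        _ = lamM^2 := mul_one _
    rw [hqq]
    have hlb := hlam1_lb i hi
    have hlk : 0 < lamm / (k:ℝ) := by positivity
    calc (g ⬝ᵥ g) / lam1i^2 ≤ lamM^2 / lam1i^2 :=
        div_le_div_of_nonneg_right hgg (by positivity)
      _ ≤ lamM^2 / (lamm/(k:ℝ))^2 := by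
          apply div_le_div_of_nonneg_left (sq_nonneg _) (by positivity)
          exact pow_le_pow_left₀ hlk.le hlb 2
      _ = κ^2 := by
          rw [hκdef]
          field_simp
  -- multiplicity bound
  have hm_le : ∀ i : Fin ℓ, fratio hd (M i) A = (⨆ i', fratio hd (M i') A) →
      (Finset.univ.filter (fun r => (hN_pd i).1.eigenvalues r
        = sortedEigs (Aᵀ * M i * A) ⟨0, hd⟩)).card ≤ k - 1 := by
    intro i hi
    set lam1i := sortedEigs (Aᵀ * M i * A) ⟨0, hd⟩ with hlam1idef
    set F := Finset.univ.filter (fun r => (hN_pd i).1.eigenvalues r = lam1i) with hFdef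
    have hTsum : (Aᵀ * M i * A).trace = ∑ r, (hN_pd i).1.eigenvalues r :=
      trace_eq_sum_eig _ (hN_pd i).1
    have hsplit := Finset.sum_filter_add_sum_filter_not Finset.univ
      (fun r => (hN_pd i).1.eigenvalues r = lam1i) ((hN_pd i).1.eigenvalues)
    have htopsum : ∑ r ∈ F, (hN_pd i).1.eigenvalues r = (F.card : ℝ) * lam1i := by
      have hmem : ∀ r ∈ F, (hN_pd i).1.eigenvalues r = lam1i := by
        intro r hr
        rw [hFdef, Finset.mem_filter] at hr
        exact hr.2
      rw [Finset.sum_congr rfl hmem, Finset.sum_const, nsmul_eq_mul]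
    have hlam1i_pos : 0 < lam1i := hlam1_pos i
    have hcardlt : (F.card : ℝ) * lam1i < (k:ℝ) * lam1i := by
      by_cases hFne : (Finset.univ.filter (fun r => ¬ (hN_pd i).1.eigenvalues r = lam1i)).Nonempty
      · have hpos : 0 < ∑ r ∈ Finset.univ.filter
            (fun r => ¬ (hN_pd i).1.eigenvalues r = lam1i), (hN_pd i).1.eigenvalues r :=
          Finset.sum_pos (fun r _ => (hN_pd i).eigenvalues_pos r) hFne
        have h1 : (F.card : ℝ) * lam1i < (Aᵀ * M i * A).trace := by
          rw [hTsum, ← hsplit, htopsum]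
          linarith only [hpos]
        have h2 := hkeyT i hi
        calc (F.card : ℝ) * lam1i < (Aᵀ * M i * A).trace := h1
          _ ≤ (k:ℝ) * lam1i := h2
      · rw [Finset.not_nonempty_iff_eq_empty, Finset.filter_eq_empty_iff] at hFne
        have hall : ∀ r, (hN_pd i).1.eigenvalues r = lam1i := by
          intro r; have := hFne (Finset.mem_univ r); simpa using this
        have hFuniv : F = Finset.univ := by
          rw [hFdef, Finset.filter_eq_self]
          intro r _; exact hall r
        have hTval : (Aᵀ * M i * A).trace = (d:ℝ) * lam1i := by
          rw [hTsum, Finset.sum_congr rfl (fun r _ => hall r), Finset.sum_const, nsmul_eq_mul]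
          simp
        have h2 := hkeyT i hi
        rw [hTval] at h2
        have : (d:ℝ) ≤ (k:ℝ) := le_of_mul_le_mul_right h2 hlam1i_pos
        have : d ≤ k := Nat.cast_le.mp this
        omega
    have hcard : F.card < k := by
      have := lt_of_mul_lt_mul_right hcardlt hlam1i_pos.le
      exact_mod_cast this
    omega
  -- the constraint finset
  set sF : Finset (Fin ℓ × Fin d) := Finset.univ.filter
    (fun p => fratio hd (M p.1) A = (⨆ i', fratio hd (M i') A) ∧
      (hN_pd p.1).1.eigenvalues p.2 = sortedEigs (Aᵀ * M p.1 * A) ⟨0, hd⟩) with hsFdef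
  have hsF_card : sF.card ≤ d - 1 := by
    have h1 : sF.card ≤ ℓ * (k-1) := by
      rw [hsFdef, Finset.card_filter, ← Finset.univ_product_univ, Finset.sum_product]
      have hbnd : ∀ i : Fin ℓ, (∑ r : Fin d,
          if (fratio hd (M i) A = (⨆ i', fratio hd (M i') A) ∧
            (hN_pd i).1.eigenvalues r = sortedEigs (Aᵀ * M i * A) ⟨0, hd⟩) then 1 else 0)
          ≤ k - 1 := by
        intro i
        by_cases hP : fratio hd (M i) A = (⨆ i', fratio hd (M i') A)
        · simp only [hP, true_and]
          rw [← Finset.card_filter]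
          exact hm_le i hP
        · simp [hP]
      calc (∑ i : Fin ℓ, ∑ r : Fin d,
          if (fratio hd (M i) A = (⨆ i', fratio hd (M i') A) ∧
            (hN_pd i).1.eigenvalues r = sortedEigs (Aᵀ * M i * A) ⟨0, hd⟩) then 1 else 0)
          ≤ ∑ _i : Fin ℓ, (k-1) := Finset.sum_le_sum (fun i _ => hbnd i)
        _ = ℓ * (k-1) := by simp [Finset.sum_const, mul_comm]
    omega
  -- the orthogonal vector u₀
  set qE : Fin ℓ × Fin d → EuclideanSpace ℝ (Fin d) := fun p => WithLp.toLp 2 (q p) with hqEdef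
  set K : Submodule ℝ (EuclideanSpace ℝ (Fin d)) :=
    Submodule.span ℝ (↑(sF.image qE)) with hKdef
  have hK_rank : Module.finrank ℝ K ≤ d - 1 := by
    calc Module.finrank ℝ K ≤ (sF.image qE).card := finrank_span_finset_le_card _
      _ ≤ sF.card := Finset.card_image_le
      _ ≤ d - 1 := hsF_card
  have hKorth : ∃ v : EuclideanSpace ℝ (Fin d), v ∈ Kᗮ ∧ v ≠ 0 := by
    by_contra hcon
    push_neg at hcon
    have hbot : Kᗮ = ⊥ := by
      rw [Submodule.eq_bot_iff]
      exact hcon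
    have h1 := Submodule.finrank_add_finrank_orthogonal K
    rw [hbot] at h1
    rw [finrank_euclideanSpace_fin] at h1
    simp only [finrank_bot, add_zero] at h1
    omega
  obtain ⟨v0, hv0K, hv0ne⟩ := hKorth
  have hnv0 : ‖v0‖ ≠ 0 := norm_ne_zero_iff.mpr hv0ne
  set u₀ : Fin d → ℝ := WithLp.ofLp (‖v0‖⁻¹ • v0 : EuclideanSpace ℝ (Fin d)) with hu₀def
  have hu₀E : (WithLp.toLp 2 u₀ : EuclideanSpace ℝ (Fin d)) ∈ Kᗮ := by
    rw [hu₀def, WithLp.toLp_ofLp]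
    exact Submodule.smul_mem _ _ hv0K
  have hu₀unit : u₀ ⬝ᵥ u₀ = 1 := by
    have h1 : (inner ℝ ((‖v0‖⁻¹ • v0 : EuclideanSpace ℝ (Fin d)))
        ((‖v0‖⁻¹ • v0 : EuclideanSpace ℝ (Fin d))) : ℝ) = 1 := by
      rw [real_inner_self_eq_norm_sq]
      rw [norm_smul]
      simp [abs_of_nonneg (inv_nonneg.mpr (norm_nonneg v0))]
      field_simp
      simp
    exact (inner_eq_dot _ _).symm.trans h1
  have hu₀orth : ∀ p ∈ sF, q p ⬝ᵥ u₀ = 0 := by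
    intro p hp
    have hqK : qE p ∈ K := by
      rw [hKdef]
      apply Submodule.subset_span
      exact Finset.mem_coe.mpr (Finset.mem_image_of_mem qE hp)
    have h1 : (inner ℝ (qE p) (WithLp.toLp 2 u₀ : EuclideanSpace ℝ (Fin d)) : ℝ) = 0 :=
      (Submodule.mem_orthogonal K _).mp hu₀E (qE p) hqK
    rw [inner_eq_dot] at h1
    exact h1
  -- choose ε₀ via key_est
  have hNe : Nonempty {i : Fin ℓ // fratio hd (M i) A = ⨆ i', fratio hd (M i') A} :=
    ⟨⟨imax, hfsup_eq.symm⟩⟩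
  have hkeyest : ∀ i : {i : Fin ℓ // fratio hd (M i) A = ⨆ i', fratio hd (M i') A},
      ∃ ε₀ > (0:ℝ), ∀ (η : Fin d → ℝ) (ε : ℝ), 0 < ε → ε < ε₀ →
      η ⬝ᵥ η ≤ (9/4)/smin^2 →
      lamm/4 ≤ η ⬝ᵥ (Aᵀ * M i.1 * A).mulVec η →
      (∀ r, (hN_pd i.1).1.eigenvalues r = sortedEigs (Aᵀ * M i.1 * A) ⟨0, hd⟩ →
        ((⇑((hN_pd i.1).1.eigenvectorBasis r) : Fin d → ℝ) ⬝ᵥ η)^2 ≤ κ^2*c₀^2) →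
      4 * ((d:ℝ) * (κ^2*c₀^2)) * (Aᵀ * M i.1 * A).trace ≤ lamm/4 →
      sortedEigs (((1 : Matrix (Fin d) (Fin d) ℝ) + ε • vecMulVec η η)ᵀ * (Aᵀ * M i.1 * A) *
          ((1 : Matrix (Fin d) (Fin d) ℝ) + ε • vecMulVec η η)) ⟨0, hd⟩ /
          ((((1 : Matrix (Fin d) (Fin d) ℝ) + ε • vecMulVec η η)ᵀ * (Aᵀ * M i.1 * A) *
            ((1 : Matrix (Fin d) (Fin d) ℝ) + ε • vecMulVec η η)).trace)
        < sortedEigs (Aᵀ * M i.1 * A) ⟨0, hd⟩ / (Aᵀ * M i.1 * A).trace := by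
    intro i
    exact key_est hd hk hdk (Aᵀ * M i.1 * A) (hN_pd i.1) (hkeyT i.1 i.2)
      ((9/4)/smin^2) (lamm/4) (κ^2*c₀^2) (by positivity) (by positivity) (by positivity)
  choose ε₀f hε₀f_pos hε₀f using hkeyest
  set ε₀ := Finset.inf' Finset.univ (Finset.univ_nonempty_iff.mpr hNe) ε₀f with hε₀def
  have hε₀pos : 0 < ε₀ := by
    rw [hε₀def, Finset.lt_inf'_iff]
    intro i _
    exact hε₀f_pos i
  refine ⟨u₀, hu₀unit, ε₀, hε₀pos, ?_⟩
  intro u hu ε hε hεlt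
  -- basic facts about u
  set δ : Fin d → ℝ := u - u₀ with hδdef
  have hδδ : δ ⬝ᵥ δ < c₀^2 := hu
  have hδδ0 : 0 ≤ δ ⬝ᵥ δ := dot_self_nonneg δ
  have hc₀sq : c₀^2 ≤ 1/4 := by nlinarith [hc₀half, hc₀pos]
  have hu_eq : u = u₀ + δ := by rw [hδdef]; abel
  have huu : u ⬝ᵥ u = 1 + 2*(u₀ ⬝ᵥ δ) + δ ⬝ᵥ δ := by
    rw [hu_eq, add_dotProduct, dotProduct_add, dotProduct_add, hu₀unit,
      dotProduct_comm δ u₀]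
    ring
  have hu₀δ : (u₀ ⬝ᵥ δ)^2 ≤ δ ⬝ᵥ δ := by
    have := dot_sq_le u₀ δ
    rwa [hu₀unit, one_mul] at this
  obtain ⟨huu_lb, huu_ub⟩ := arith_interval (u ⬝ᵥ u) (u₀ ⬝ᵥ δ) (δ ⬝ᵥ δ) huu hδδ0
    (lt_of_lt_of_le hδδ hc₀sq) hu₀δ
  -- facts about η
  set η : Fin d → ℝ := ∑ j, (u j / sortedEigs A j) • w j with hηdef
  have hw_eta : ∀ r, w r ⬝ᵥ η = u r / sortedEigs A r := by
    intro r
    rw [hηdef, dot_sum_right]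
    rw [Finset.sum_congr rfl (fun j (_ : j ∈ Finset.univ) => by
      rw [dotProduct_smul, smul_eq_mul, hworth r j])]
    simp
  have hH2_le : η ⬝ᵥ η ≤ (9/4)/smin^2 := by
    have h1 : η ⬝ᵥ η = ∑ r, (u r / sortedEigs A r)*(u r / sortedEigs A r) := by
      rw [dot_dot_expand hd hworth hwx η η]
      apply Finset.sum_congr rfl
      intro r _
      rw [hw_eta r]
    rw [h1]
    have h2 : ∀ r, (u r / sortedEigs A r)*(u r / sortedEigs A r) ≤ (u r)^2/smin^2 := by
      intro r
      have e1 : (u r / sortedEigs A r)*(u r / sortedEigs A r) = (u r)^2/(sortedEigs A r)^2 := by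
        field_simp
      rw [e1]
      apply div_le_div_of_nonneg_left (sq_nonneg _) (by positivity)
      exact pow_le_pow_left₀ hsmin_pos.le (hsmin_le r) 2
    calc ∑ r, (u r / sortedEigs A r)*(u r / sortedEigs A r)
        ≤ ∑ r, (u r)^2/smin^2 := Finset.sum_le_sum (fun r _ => h2 r)
      _ = (∑ r, (u r)^2)/smin^2 := by rw [Finset.sum_div]
      _ = (u ⬝ᵥ u)/smin^2 := by
          congr 1
          rw [dotProduct]
          apply Finset.sum_congr rfl
          intro r _
          ring
      _ ≤ (9/4)/smin^2 := by
          apply div_le_div_of_nonneg_right huu_ub (by positivity)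
  have hAeta : A.mulVec η = ∑ j, u j • w j := by
    rw [hηdef, ← Matrix.mulVecLin_apply, map_sum]
    apply Finset.sum_congr rfl
    intro j _
    rw [_root_.map_smul, Matrix.mulVecLin_apply, hw j, smul_smul, div_mul_cancel₀ _ (hspos j).ne']
  have hw_ut : ∀ r, w r ⬝ᵥ (∑ j, u j • w j) = u r := by
    intro r
    rw [dot_sum_right]
    rw [Finset.sum_congr rfl (fun j (_ : j ∈ Finset.univ) => by
      rw [dotProduct_smul, smul_eq_mul, hworth r j])]
    simp
  have hut : (∑ j, u j • w j) ⬝ᵥ (∑ j, u j • w j) = u ⬝ᵥ u := by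
    rw [dot_dot_expand hd hworth hwx]
    rw [Finset.sum_congr rfl (fun r (_ : r ∈ Finset.univ) => by rw [hw_ut r])]
    rw [dotProduct]
  have hGlb_i : ∀ i : Fin ℓ, lamm/4 ≤ η ⬝ᵥ (Aᵀ * M i * A).mulVec η := by
    intro i
    rw [conj_dot (M i) A η η, hAeta]
    have h1 := hrayM_low i (∑ j, u j • w j)
    rw [hut] at h1
    have h2 : lamm/4 ≤ lamm * (u ⬝ᵥ u) := by
      calc lamm/4 = lamm * (1/4) := by ring
        _ ≤ lamm * (u ⬝ᵥ u) := mul_le_mul_of_nonneg_left huu_lb hlamm_pos.le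
    linarith only [h1, h2]
  have htopbound : ∀ i : {i : Fin ℓ // fratio hd (M i) A = ⨆ i', fratio hd (M i') A},
      ∀ r, (hN_pd i.1).1.eigenvalues r = sortedEigs (Aᵀ * M i.1 * A) ⟨0, hd⟩ →
      ((⇑((hN_pd i.1).1.eigenvectorBasis r) : Fin d → ℝ) ⬝ᵥ η)^2 ≤ κ^2*c₀^2 := by
    intro i r hr
    have h1 : ⇑((hN_pd i.1).1.eigenvectorBasis r) ⬝ᵥ η = q (i.1, r) ⬝ᵥ u := by
      rw [hηdef]
      exact hq_eta (i.1, r) u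
    have hmem : (i.1, r) ∈ sF := by
      rw [hsFdef, Finset.mem_filter]
      exact ⟨Finset.mem_univ _, i.2, hr⟩
    have h2 : q (i.1, r) ⬝ᵥ u = q (i.1, r) ⬝ᵥ δ := by
      rw [hu_eq, dotProduct_add, hu₀orth (i.1, r) hmem, zero_add]
    rw [h1, h2]
    have h3 := dot_sq_le (q (i.1, r)) δ
    have h4 := hq_sq (i.1, r) i.2 hr
    calc (q (i.1, r) ⬝ᵥ δ)^2 ≤ (q (i.1, r) ⬝ᵥ q (i.1, r)) * (δ ⬝ᵥ δ) := h3
      _ ≤ κ^2 * c₀^2 := by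
          apply mul_le_mul h4 hδδ.le hδδ0 (sq_nonneg κ)
  have harithd : ∀ i : Fin ℓ, 4 * ((d:ℝ) * (κ^2*c₀^2)) * (Aᵀ * M i * A).trace ≤ lamm/4 := by
    intro i
    exact arith_dbound (d:ℝ) (κ^2) (c₀^2) lamM ((Aᵀ * M i * A).trace) lamm
      hdR.le (sq_nonneg κ) (sq_nonneg c₀) hlamM_pos.le (hT_ub i) hc₀key
  -- strict inequality for each active index
  have hstrict : ∀ i : {i : Fin ℓ // fratio hd (M i) A = ⨆ i', fratio hd (M i') A},
      fratio hd (M i.1) (A * (1 + ε • vecMulVec η η)) < fratio hd (M i.1) A := by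
    intro i
    have hεlt' : ε < ε₀f i := lt_of_lt_of_le hεlt (by
      rw [hε₀def]
      exact Finset.inf'_le _ (Finset.mem_univ i))
    have h := hε₀f i η ε hε hεlt' hH2_le (hGlb_i i.1) (htopbound i) (harithd i.1)
    have e1 : fratio hd (M i.1) (A * (1 + ε • vecMulVec η η))
        = sortedEigs (((1 : Matrix (Fin d) (Fin d) ℝ) + ε • vecMulVec η η)ᵀ * (Aᵀ * M i.1 * A) *
            ((1 : Matrix (Fin d) (Fin d) ℝ) + ε • vecMulVec η η)) ⟨0, hd⟩ /
          ((((1 : Matrix (Fin d) (Fin d) ℝ) + ε • vecMulVec η η)ᵀ * (Aᵀ * M i.1 * A) *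
            ((1 : Matrix (Fin d) (Fin d) ℝ) + ε • vecMulVec η η)).trace) := by
      show sortedEigs ((A * (1 + ε • vecMulVec η η))ᵀ * M i.1 * (A * (1 + ε • vecMulVec η η))) ⟨0, hd⟩ /
          ((A * (1 + ε • vecMulVec η η))ᵀ * M i.1 * (A * (1 + ε • vecMulVec η η))).trace = _
      rw [conj_factor]
    rw [e1]
    exact h
  -- conclude via suprema
  obtain ⟨ib, _, hib⟩ := Finset.exists_max_image
    (Finset.univ : Finset {i : Fin ℓ // fratio hd (M i) A = ⨆ i', fratio hd (M i') A})
    (fun i => fratio hd (M i.1) (A * (1 + ε • vecMulVec η η)))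
    ⟨Classical.arbitrary _, Finset.mem_univ _⟩
  have hL : (⨆ i : {i : Fin ℓ // fratio hd (M i) A = ⨆ i', fratio hd (M i') A},
      fratio hd (M i.1) (A * (1 + ε • vecMulVec η η)))
      ≤ fratio hd (M ib.1) (A * (1 + ε • vecMulVec η η)) :=
    ciSup_le (fun i => hib i (Finset.mem_univ i))
  have hR : (⨆ i : {i : Fin ℓ // fratio hd (M i) A = ⨆ i', fratio hd (M i') A},
      fratio hd (M i.1) A) = ⨆ i', fratio hd (M i') A := by
    have h1 : ∀ i : {i : Fin ℓ // fratio hd (M i) A = ⨆ i', fratio hd (M i') A},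
        fratio hd (M i.1) A = ⨆ i', fratio hd (M i') A := fun i => i.2
    calc (⨆ i : {i : Fin ℓ // fratio hd (M i) A = ⨆ i', fratio hd (M i') A},
        fratio hd (M i.1) A)
        = ⨆ _i : {i : Fin ℓ // fratio hd (M i) A = ⨆ i', fratio hd (M i') A},
          (⨆ i', fratio hd (M i') A) := by
            exact iSup_congr h1
      _ = ⨆ i', fratio hd (M i') A := ciSup_const
  calc (⨆ i : {i : Fin ℓ // fratio hd (M i) A = ⨆ i', fratio hd (M i') A},
      fratio hd (M i.1) (A * (1 + ε • vecMulVec η η)))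
      ≤ fratio hd (M ib.1) (A * (1 + ε • vecMulVec η η)) := hL
    _ < fratio hd (M ib.1) A := hstrict ib
    _ = ⨆ i', fratio hd (M i') A := ib.2
    _ = ⨆ i : {i : Fin ℓ // fratio hd (M i) A = ⨆ i', fratio hd (M i') A},
        fratio hd (M i.1) A := hR.symm
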